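/- Let 𝒯 be a triangulated category, n ≥ 2 an integer, and 𝒯′ a full subcategory of 𝒯 closed under isomorphisms and closed under extensions (i.e. 𝒯′ ∗ 𝒯′ ⊆ 𝒯′). For 1 ≤ i < n let 𝒯′_{[0,i]} := 𝒯′ ∗ 𝒯′[1] ∗ ⋯ ∗ 𝒯′[i]. If 𝒯′[i] ∗ 𝒯′ ⊆ 𝒯′_{[0,i]} holds for every 1 ≤ i < n, then 𝒯′_{[0,i]} is closed under extensions (i.e. 𝒯′_{[0,i]} ∗ 𝒯′_{[0,i]} ⊆ 𝒯′_{[0,i]}) for every 1 ≤ i < n. -/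

import Mathlib

/-!
Extension-closedness of iterated star products of a subcategory of a
triangulated category (Lemma on extension-closed subcategories used to produce
`n`-exangulated categories).
-/

open CategoryTheory CategoryTheory.Limits CategoryTheory.Pretriangulated

universe v u

namespace Stmt19

variable (C : Type u) [Category.{v} C] [HasZeroObject C] [HasShift C ℤ]
  [Preadditive C] [∀ k : ℤ, (shiftFunctor C k).Additive] [Pretriangulated C]
  [IsTriangulated C]

/-- `S ∗ T` is the class of objects `X` admitting a distinguished triangle
`A → X → B → A[1]` with `A ∈ S` and `B ∈ T`. -/
def star (S T : Set C) : Set C :=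
  {X | ∃ (A B : C) (f : A ⟶ X) (g : X ⟶ B) (h : B ⟶ A⟦(1 : ℤ)⟧),
    A ∈ S ∧ B ∈ T ∧ (Triangle.mk f g h ∈ distTriang C)}

/-- `S[j]`, the class of all shifts `A⟦j⟧` of objects `A ∈ S`. -/
def shiftSet (S : Set C) (j : ℕ) : Set C :=
  (fun A => A⟦(j : ℤ)⟧) '' S

/-- `starSeq C S i = S ∗ S[1] ∗ ⋯ ∗ S[i]` (the operation `∗` being associative
by the octahedral axiom, the bracketing is immaterial; here it is taken
left-associated). -/
def starSeq (S : Set C) : ℕ → Set C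
  | 0 => S
  | (i + 1) => star C (starSeq S i) (shiftSet C S (i + 1))

section Aux

variable {C}

/-- Closure of a class of objects under isomorphisms. -/
def isoCl (A : Set C) : Set C := {X | ∃ a ∈ A, Nonempty (a ≅ X)}

lemma subset_isoCl (A : Set C) : A ⊆ isoCl A := fun X hX => ⟨X, hX, ⟨Iso.refl X⟩⟩

lemma isoCl_mono {A B : Set C} (h : A ⊆ B) : isoCl A ⊆ isoCl B := by
  rintro X ⟨a, ha, ⟨e⟩⟩; exact ⟨a, h ha, ⟨e⟩⟩

lemma isoCl_isoCl {A : Set C} : isoCl (isoCl A) ⊆ isoCl A := by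
  rintro X ⟨a, ⟨b, hb, ⟨e₁⟩⟩, ⟨e₂⟩⟩; exact ⟨b, hb, ⟨e₁.trans e₂⟩⟩

/-- `A ≼ B` : every object of `A` is isomorphic to an object of `B`. -/
def sle (A B : Set C) : Prop := A ⊆ isoCl B

lemma sle_of_subset {A B : Set C} (h : A ⊆ B) : sle A B :=
  fun X hX => subset_isoCl _ (h hX)

lemma sle_refl (A : Set C) : sle A A := sle_of_subset (le_refl _)

lemma sle_trans {A B D : Set C} (h1 : sle A B) (h2 : sle B D) : sle A D :=
  fun X hX => isoCl_isoCl (isoCl_mono h2 (h1 hX))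

lemma subset_of_sle {A B : Set C} (h1 : sle A B) (h2 : isoCl B ⊆ B) : A ⊆ B :=
  fun X hX => h2 (h1 hX)

/-- Membership in a star from a distinguished triangle whose extreme objects are
isomorphic to objects of the two classes. -/
lemma mem_star (A B : Set C) (T : Triangle C) (hT : T ∈ distTriang C)
    (h₁ : T.obj₁ ∈ isoCl A) (h₃ : T.obj₃ ∈ isoCl B) : T.obj₂ ∈ star C A B := by
  obtain ⟨a, ha, ⟨ea⟩⟩ := h₁
  obtain ⟨b, hb, ⟨eb⟩⟩ := h₃
  refine ⟨a, b, ea.hom ≫ T.mor₁, T.mor₂ ≫ eb.inv, eb.hom ≫ T.mor₃ ≫ ea.inv⟦(1 : ℤ)⟧',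
    ha, hb, ?_⟩
  refine isomorphic_distinguished _ hT _ ?_
  refine Triangle.isoMk _ _ ea (Iso.refl _) eb (by simp [Triangle.mk]) (by simp [Triangle.mk]) ?_
  dsimp [Triangle.mk]
  simp only [Category.assoc, ← Functor.map_comp, Iso.inv_hom_id, Functor.map_id,
    Category.comp_id]
  simp

lemma star_isoClosed {A B : Set C} : isoCl (star C A B) ⊆ star C A B := by
  rintro Y ⟨X, ⟨a, b, f, g, h, ha, hb, hT⟩, ⟨e⟩⟩
  refine ⟨a, b, f ≫ e.hom, e.inv ≫ g, h, ha, hb, ?_⟩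
  refine isomorphic_distinguished _ hT _ ?_
  exact Triangle.isoMk _ _ (Iso.refl _) e.symm (Iso.refl _) (by simp [Triangle.mk]) (by simp [Triangle.mk]) (by simp [Triangle.mk])

lemma sle_star {A A' B B' : Set C} (hA : sle A A') (hB : sle B B') :
    sle (star C A B) (star C A' B') := by
  rintro X ⟨a, b, f, g, h, ha, hb, hT⟩
  exact subset_isoCl _ (mem_star A' B' (Triangle.mk f g h) hT (hA ha) (hB hb))

lemma sle_shiftSet {A B : Set C} (hAB : sle A B) (j : ℕ) :
    sle (shiftSet C A j) (shiftSet C B j) := by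
  rintro _ ⟨a, ha, rfl⟩
  obtain ⟨b, hb, ⟨e⟩⟩ := hAB ha
  exact ⟨b⟦(j : ℤ)⟧, ⟨b, hb, rfl⟩, ⟨(shiftFunctor C (j : ℤ)).mapIso e⟩⟩

lemma shiftSet_star_sle (A B : Set C) (j : ℕ) :
    sle (shiftSet C (star C A B) j) (star C (shiftSet C A j) (shiftSet C B j)) := by
  rintro _ ⟨X, ⟨a, b, f, g, h, ha, hb, hT⟩, rfl⟩
  apply subset_isoCl
  have hsh := Pretriangulated.Triangle.shift_distinguished _ hT (j : ℤ)
  exact mem_star _ _ _ hsh (subset_isoCl _ ⟨a, ha, rfl⟩) (subset_isoCl _ ⟨b, hb, rfl⟩)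

lemma star_shiftSet_sle (A B : Set C) (j : ℕ) :
    sle (star C (shiftSet C A j) (shiftSet C B j)) (shiftSet C (star C A B) j) := by
  rintro X ⟨_, _, f, g, h, ⟨a, ha, rfl⟩, ⟨b, hb, rfl⟩, hT⟩
  have hsh := Pretriangulated.Triangle.shift_distinguished _ hT (-(j : ℤ))
  have hmem : X⟦-(j : ℤ)⟧ ∈ star C A B := by
    refine mem_star A B _ hsh ⟨a, ha, ⟨?_⟩⟩ ⟨b, hb, ⟨?_⟩⟩
    · exact (shiftEquiv C (j : ℤ)).unitIso.app a
    · exact (shiftEquiv C (j : ℤ)).unitIso.app b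
  exact ⟨X⟦-(j : ℤ)⟧⟦(j : ℤ)⟧, ⟨X⟦-(j : ℤ)⟧, hmem, rfl⟩,
    ⟨(shiftEquiv C (j : ℤ)).counitIso.app X⟩⟩

lemma shiftSet_add_sle (A : Set C) (a b : ℕ) :
    sle (shiftSet C (shiftSet C A a) b) (shiftSet C A (a + b)) := by
  rintro _ ⟨_, ⟨x, hx, rfl⟩, rfl⟩
  refine ⟨x⟦((a + b : ℕ) : ℤ)⟧, ⟨x, hx, rfl⟩, ⟨?_⟩⟩
  exact (shiftFunctorAdd' C (a : ℤ) (b : ℤ) ((a + b : ℕ) : ℤ) (by push_cast; ring)).app x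

lemma shiftSet_add_sle' (A : Set C) (a b : ℕ) :
    sle (shiftSet C A (a + b)) (shiftSet C (shiftSet C A a) b) := by
  rintro _ ⟨x, hx, rfl⟩
  exact ⟨x⟦(a : ℤ)⟧⟦(b : ℤ)⟧, ⟨x⟦(a : ℤ)⟧, ⟨x, hx, rfl⟩, rfl⟩,
    ⟨((shiftFunctorAdd' C (a : ℤ) (b : ℤ) ((a + b : ℕ) : ℤ) (by push_cast; ring)).app x).symm⟩⟩

/-- Associativity of `∗`, first direction (octahedron axiom). -/
lemma star_assoc₁ (A B D : Set C) : star C (star C A B) D ⊆ star C A (star C B D) := by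
  rintro X ⟨E, d, f, g, h, ⟨a, b, f', g', h', ha, hb, hT'⟩, hd, hT⟩
  obtain ⟨Y, v, w, hY⟩ := distinguished_cocone_triangle (f' ≫ f)
  have oct := Triangulated.someOctahedron rfl hT' hT hY
  exact ⟨a, Y, f' ≫ f, v, w, ha,
    ⟨b, d, oct.m₁, oct.m₃, h ≫ g'⟦(1 : ℤ)⟧', hb, hd, oct.mem⟩, hY⟩

/-- Associativity of `∗`, second direction (octahedron axiom). -/
lemma star_assoc₂ (A B D : Set C) : star C A (star C B D) ⊆ star C (star C A B) D := by
  rintro X ⟨a, F, f, g, h, ha, ⟨b, d, f', g', h', hb, hd, hT'⟩, hT⟩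
  obtain ⟨W, v, w, hW⟩ := distinguished_cocone_triangle (g ≫ g')
  have oct := Triangulated.someOctahedron rfl (rot_of_distTriang _ hT)
    (rot_of_distTriang _ hT') hW
  have hsh := Pretriangulated.Triangle.shift_distinguished _ oct.mem (-1 : ℤ)
  have hW' : W⟦(-1 : ℤ)⟧ ∈ star C A B := by
    refine mem_star A B _ hsh ⟨a, ha, ⟨?_⟩⟩ ⟨b, hb, ⟨?_⟩⟩
    · exact (shiftEquiv C (1 : ℤ)).unitIso.app a
    · exact (shiftEquiv C (1 : ℤ)).unitIso.app b
  exact ⟨W⟦(-1 : ℤ)⟧, d, _, _, _, hW', hd, inv_rot_of_distTriang _ hW⟩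

lemma starSeq_succ (S : Set C) (i : ℕ) :
    starSeq C S (i + 1) = star C (starSeq C S i) (shiftSet C S (i + 1)) := rfl

lemma starSeq_isoClosed {S : Set C} (hiso : ∀ ⦃X Y : C⦄, (X ≅ Y) → X ∈ S → Y ∈ S) :
    ∀ i, isoCl (starSeq C S i) ⊆ starSeq C S i
  | 0 => by rintro X ⟨a, ha, ⟨e⟩⟩; exact hiso e ha
  | (i + 1) => star_isoClosed

/-- The splitting `S ∗ ⋯ ∗ S[c+1+d] ≈ (S ∗ ⋯ ∗ S[c]) ∗ (S ∗ ⋯ ∗ S[d])[c+1]`,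
both directions up to isomorphism closure. -/
lemma split (S : Set C) (c d : ℕ) :
    sle (starSeq C S (c + 1 + d))
      (star C (starSeq C S c) (shiftSet C (starSeq C S d) (c + 1))) ∧
    sle (star C (starSeq C S c) (shiftSet C (starSeq C S d) (c + 1)))
      (starSeq C S (c + 1 + d)) := by
  induction d with
  | zero => exact ⟨sle_refl _, sle_refl _⟩
  | succ d ih =>
    constructor
    · refine sle_trans (sle_star ih.1 (sle_refl (shiftSet C S (c + 1 + d + 1)))) ?_
      refine sle_trans (sle_of_subset (star_assoc₁ _ _ _)) ?_
      refine sle_star (sle_refl _) ?_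
      refine sle_trans (sle_star (sle_refl (shiftSet C (starSeq C S d) (c + 1))) ?_)
        (star_shiftSet_sle _ _ (c + 1))
      have h1 := shiftSet_add_sle' S (d + 1) (c + 1)
      rwa [show (d + 1) + (c + 1) = c + 1 + d + 1 from by omega] at h1
    · refine sle_trans (sle_star (sle_refl (starSeq C S c)) ?_)
        (sle_trans (sle_of_subset (star_assoc₂ _ _ _)) (sle_star ih.2 (sle_refl _)))
      refine sle_trans (shiftSet_star_sle _ _ (c + 1)) ?_
      refine sle_star (sle_refl _) ?_
      have h1 := shiftSet_add_sle S (d + 1) (c + 1)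
      rwa [show (d + 1) + (c + 1) = c + 1 + d + 1 from by omega] at h1

end Aux

/-- **Statement 19.**  Let `𝒯` be a triangulated category, `n ≥ 2`, and `𝒯′` a full
subcategory closed under isomorphisms and extensions.  If
`𝒯′[i] ∗ 𝒯′ ⊆ 𝒯′_{[0,i]}` for all `1 ≤ i < n`, then `𝒯′_{[0,i]}` is closed under
extensions for all `1 ≤ i < n`. -/
theorem statement_19 (n : ℕ) (hn : 2 ≤ n) (S : Set C)
    (hiso : ∀ ⦃X Y : C⦄, (X ≅ Y) → X ∈ S → Y ∈ S)
    (hext : star C S S ⊆ S)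
    (h : ∀ i : ℕ, 1 ≤ i → i < n → star C (shiftSet C S i) S ⊆ starSeq C S i) :
    ∀ i : ℕ, 1 ≤ i → i < n →
      star C (starSeq C S i) (starSeq C S i) ⊆ starSeq C S i := by
  have key : ∀ m : ℕ, m < n →
      (star C (starSeq C S m) S ⊆ starSeq C S m) ∧
      (star C (starSeq C S m) (starSeq C S m) ⊆ starSeq C S m) := by
    intro m
    induction m using Nat.strong_induction_on with
    | _ m IH =>
    intro hmn
    rcases m with _ | k
    · exact ⟨hext, hext⟩
    · have hcl : isoCl (starSeq C S (k + 1)) ⊆ starSeq C S (k + 1) :=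
        starSeq_isoClosed hiso _
      -- absorption of a single shifted copy of `S` on the right
      have D : ∀ b, 1 ≤ b → b ≤ k + 1 →
          sle (star C (starSeq C S (k + 1)) (shiftSet C S b)) (starSeq C S (k + 1)) := by
        intro b hb1 hb2
        obtain ⟨c, rfl⟩ : ∃ c, b = c + 1 := ⟨b - 1, by omega⟩
        obtain ⟨d, hd⟩ : ∃ d, k + 1 = c + 1 + d := ⟨k + 1 - (c + 1), by omega⟩
        have hsp := split S c d
        rw [show c + 1 + d = k + 1 from hd.symm] at hsp
        have hE : star C (starSeq C S d) S ⊆ starSeq C S d :=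
          (IH d (by omega) (by omega)).1
        refine sle_trans (sle_star hsp.1 (sle_refl _)) ?_
        refine sle_trans (sle_of_subset (star_assoc₁ _ _ _)) ?_
        refine sle_trans (sle_star (sle_refl _) ?_) hsp.2
        refine sle_trans (star_shiftSet_sle _ _ _) ?_
        exact sle_shiftSet (sle_of_subset hE) _
      -- E at level `k+1`
      have hEm : sle (star C (starSeq C S (k + 1)) S) (starSeq C S (k + 1)) := by
        have Pk : star C (starSeq C S k) (starSeq C S k) ⊆ starSeq C S k :=
          (IH k (by omega) (by omega)).2
        have hh : star C (shiftSet C S (k + 1)) S ⊆ starSeq C S (k + 1) :=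
          h (k + 1) (by omega) hmn
        rw [starSeq_succ]
        refine sle_trans (sle_of_subset (star_assoc₁ _ _ _)) ?_
        refine sle_trans (sle_star (sle_refl _) (sle_of_subset hh)) ?_
        rw [starSeq_succ]
        refine sle_trans (sle_of_subset (star_assoc₂ _ _ _)) ?_
        exact sle_star (sle_of_subset Pk) (sle_refl _)
      -- absorption of shifted initial segments
      have G : ∀ j, j + 1 ≤ k →
          sle (star C (starSeq C S (k + 1)) (shiftSet C (starSeq C S j) 1))
            (starSeq C S (k + 1)) := by
        intro j
        induction j with
        | zero => intro hj; exact D 1 (by omega) (by omega)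
        | succ j ihj =>
          intro hj
          have ihj' := ihj (by omega)
          refine sle_trans (sle_star (sle_refl (starSeq C S (k + 1)))
            (sle_trans (shiftSet_star_sle _ _ _)
              (sle_star (sle_refl _) (shiftSet_add_sle S (j + 1) 1)))) ?_
          refine sle_trans (sle_of_subset (star_assoc₂ _ _ _)) ?_
          refine sle_trans (sle_star ihj' (sle_refl _)) ?_
          exact D (j + 1 + 1) (by omega) (by omega)
      -- absorption of `starSeq S k` on the right
      have Habs : sle (star C (starSeq C S (k + 1)) (starSeq C S k))
          (starSeq C S (k + 1)) := by
        rcases Nat.eq_zero_or_pos k with h0 | hpos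
        · subst h0; exact hEm
        · obtain ⟨k', rfl⟩ : ∃ k', k = k' + 1 := ⟨k - 1, by omega⟩
          have hsp := split S 0 k'
          rw [show 0 + 1 + k' = k' + 1 from by omega] at hsp
          refine sle_trans (sle_star (sle_refl (starSeq C S (k' + 1 + 1))) hsp.1) ?_
          refine sle_trans (sle_of_subset (star_assoc₂ _ _ _)) ?_
          refine sle_trans (sle_star hEm (sle_refl _)) ?_
          exact G k' (by omega)
      -- extension-closedness at level `k+1`
      have hPm : sle (star C (starSeq C S (k + 1)) (starSeq C S (k + 1)))
          (starSeq C S (k + 1)) := by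
        refine sle_trans (sle_of_subset (star_assoc₂ (starSeq C S (k + 1))
          (starSeq C S k) (shiftSet C S (k + 1)))) ?_
        refine sle_trans (sle_star Habs (sle_refl _)) ?_
        exact D (k + 1) (by omega) (by omega)
      exact ⟨subset_of_sle hEm hcl, subset_of_sle hPm hcl⟩
  intro i _ hi2
  exact (key i hi2).2
end Stmt19
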